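/- For m ≥ 1, λ < 0, and arbitrary 1-antiperiodic functions μ_1,...,μ_m : ℝ → ℝ, the function y(x) = (μ_1(x) + μ_2(x)x + ... + μ_m(x)x^{m-1}) |λ|^x satisfies (E - λI)^m y = 0. -/
import Mathlib


/-- The operator `y ↦ E y - λ y`, where `(E y)(x) = y (x + 1)` is the shift operator. -/
def shiftMinusLam (lam : ℝ) (y : ℝ → ℝ) : ℝ → ℝ := fun x => y (x + 1) - lam * y x

lemma binom_diff (x : ℝ) (i : ℕ) :
    (x+1)^i - x^i = ∑ j ∈ Finset.range i, x^j * (Nat.choose i j : ℝ) := by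
  have h := add_pow x 1 i
  rw [Finset.sum_range_succ] at h
  simp at h
  linarith

lemma key (lam : ℝ) (hlam : lam < 0) : ∀ (n : ℕ) (y : ℝ → ℝ),
    (∃ ν : ℕ → ℝ → ℝ, (∀ i x, ν i (x+1) = -ν i x) ∧
      ∀ x, y x = (∑ i ∈ Finset.range n, ν i x * x ^ i) * |lam| ^ x) →
    (shiftMinusLam lam)^[n] y = fun _ => 0 := by
  intro n
  induction n with
  | zero =>
    intro y ⟨ν, _, hy⟩
    funext x
    simp [hy x]
  | succ n ih =>
    intro y ⟨ν, hanti, hy⟩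
    rw [Function.iterate_succ_apply]
    apply ih
    refine ⟨fun j x => lam * ∑ i ∈ Finset.range (n+1),
      (if j < i then (Nat.choose i j : ℝ) else 0) * ν i x, ?_, ?_⟩
    · intro j x
      show lam * ∑ i ∈ Finset.range (n+1), (if j < i then (Nat.choose i j : ℝ) else 0) * ν i (x+1)
        = -(lam * ∑ i ∈ Finset.range (n+1), (if j < i then (Nat.choose i j : ℝ) else 0) * ν i x)
      rw [← mul_neg, ← Finset.sum_neg_distrib]
      exact congrArg (lam * ·) (Finset.sum_congr rfl (fun i _ => by rw [hanti]; ring))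
    · intro x
      have habs : |lam| = -lam := abs_of_neg hlam
      have hpos : (0:ℝ) < |lam| := abs_pos.mpr hlam.ne
      show y (x+1) - lam * y x = (∑ j ∈ Finset.range n, (lam * ∑ i ∈ Finset.range (n+1),
        (if j < i then (Nat.choose i j : ℝ) else 0) * ν i x) * x ^ j) * |lam| ^ x
      rw [hy (x+1), hy x]
      have hrp : |lam| ^ (x+1) = |lam| ^ x * |lam| := by
        rw [Real.rpow_add_one hpos.ne']
      rw [hrp]
      have h1 : (∑ i ∈ Finset.range (n+1), ν i (x+1) * (x+1) ^ i)
          = -∑ i ∈ Finset.range (n+1), ν i x * (x+1) ^ i := by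
        rw [← Finset.sum_neg_distrib]
        exact Finset.sum_congr rfl (fun i _ => by rw [hanti]; ring)
      rw [h1]
      have scalar : (-∑ i ∈ Finset.range (n+1), ν i x * (x+1)^i) * |lam|
          - lam * (∑ i ∈ Finset.range (n+1), ν i x * x^i)
          = ∑ j ∈ Finset.range n, (lam * ∑ i ∈ Finset.range (n+1),
              (if j < i then (Nat.choose i j : ℝ) else 0) * ν i x) * x ^ j := by
        simp only [habs, neg_mul, Finset.sum_mul, Finset.mul_sum, ← Finset.sum_neg_distrib,
          ← Finset.sum_sub_distrib]
        rw [Finset.sum_comm]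
        refine Finset.sum_congr rfl (fun i hi => ?_)
        rw [Finset.mem_range, Nat.lt_succ_iff] at hi
        have hsub : Finset.range i ⊆ Finset.range n := Finset.range_subset_range.mpr hi
        have hz : ∀ j ∈ Finset.range n, j ∉ Finset.range i →
            lam * ((if j < i then (Nat.choose i j : ℝ) else 0) * ν i x) * x ^ j = 0 := by
          intro j _ hj
          rw [Finset.mem_range, not_lt] at hj
          rw [if_neg (by omega)]; ring
        rw [← Finset.sum_subset hsub hz]
        calc -(ν i x * (x+1)^i * -lam) - lam * (ν i x * x^i)
            = lam * (ν i x * ((x+1)^i - x^i)) := by ring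
          _ = lam * (ν i x * ∑ j ∈ Finset.range i, x^j * (Nat.choose i j : ℝ)) := by
              rw [binom_diff]
          _ = ∑ j ∈ Finset.range i, lam * ((if j < i then (Nat.choose i j : ℝ) else 0) * ν i x) * x ^ j := by
              rw [Finset.mul_sum, Finset.mul_sum]
              refine Finset.sum_congr rfl (fun j hj => ?_)
              rw [Finset.mem_range] at hj
              rw [if_pos hj]; ring
      calc (-∑ i ∈ Finset.range (n+1), ν i x * (x+1)^i) * (|lam|^x * |lam|)
          - lam * ((∑ i ∈ Finset.range (n+1), ν i x * x^i) * |lam|^x)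
          = ((-∑ i ∈ Finset.range (n+1), ν i x * (x+1)^i) * |lam|
            - lam * (∑ i ∈ Finset.range (n+1), ν i x * x^i)) * |lam|^x := by ring
        _ = _ := by rw [scalar]

theorem solution_of_shift_operator_power_neg (m : ℕ) (hm : 1 ≤ m) (lam : ℝ)
    (hlam : lam < 0) (μ : Fin m → ℝ → ℝ) (hμ : ∀ i x, μ i (x + 1) = -μ i x)
    (y : ℝ → ℝ)
    (hy : ∀ x, y x = (∑ i : Fin m, μ i x * x ^ (i : ℕ)) * |lam| ^ x) :
    (shiftMinusLam lam)^[m] y = fun _ => 0 := by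
  apply key lam hlam m y
  refine ⟨fun i x => if h : i < m then μ ⟨i, h⟩ x else 0, ?_, ?_⟩
  · intro i x
    by_cases h : i < m
    · simp [h, hμ]
    · simp [h]
  · intro x
    rw [hy x]
    congr 1
    rw [← Fin.sum_univ_eq_sum_range (fun i => (if h : i < m then μ ⟨i, h⟩ x else 0) * x ^ i) m]
    exact Finset.sum_congr rfl fun i _ => by simp
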